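/- The topology Z^T on Minkowski space induces on every timelike curve the same subspace topology as the Euclidean topology T_E, and Z^T is the finest topology with this property: if T is any topology on M which induces on every timelike curve the same subspace topology as T_E, then T is coarser than or equal to Z^T. -/

import Mathlib

noncomputable section

open TopologicalSpace Filter

/-- Minkowski space `M = ℝ × ℝ³`. -/
abbrev Mink : Type := ℝ × EuclideanSpace ℝ (Fin 3)

/-- The Euclidean (product) topology on `M`. -/
def TE : TopologicalSpace Mink := inferInstance

/-- Time difference Δt(x,y). -/
def dtime (x y : Mink) : ℝ := y.1 - x.1

/-- Spatial distance Δr(x,y). -/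
def dspace (x y : Mink) : ℝ := ‖y.2 - x.2‖

/-- Chronological order `x ≪ y`. -/
def Chron (x y : Mink) : Prop := dspace x y < dtime x y

/-- Causal order `x ≺ y`. -/
def Causal (x y : Mink) : Prop := dspace x y ≤ dtime x y

/-- Euclidean open ball of radius ε about x. -/
def eball (x : Mink) (ε : ℝ) : Set Mink :=
  {y | Real.sqrt ((y.1 - x.1) ^ 2 + ‖y.2 - x.2‖ ^ 2) < ε}

/-- Time cone `C^T(x)`. -/
def timeCone (x : Mink) : Set Mink := {x} ∪ {y | Chron x y ∨ Chron y x}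

/-- Space cone `C^S(x)`. -/
def spaceCone (x : Mink) : Set Mink := {x} ∪ {y | |dtime x y| < dspace x y}

/-- Light cone `C^L(x)`. -/
def lightCone (x : Mink) : Set Mink := {y | y ≠ x ∧ |dtime x y| = dspace x y}

/-- Causal cone `C^J(x)`. -/
def causalCone (x : Mink) : Set Mink := {x} ∪ {y | Causal x y ∨ Causal y x}

/-- Closed space cone `K^S(x)` (space cone together with the light cone). -/
def closedSpaceCone (x : Mink) : Set Mink := {x} ∪ {y | |dtime x y| ≤ dspace x y}

/-- Bounded time cones, the defining family of `Z^T`. -/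
def BasisT : Set (Set Mink) := {S | ∃ x ε, 0 < ε ∧ S = timeCone x ∩ eball x ε}

/-- Bounded space cones, the defining family of `Z^S`. -/
def BasisS : Set (Set Mink) := {S | ∃ x ε, 0 < ε ∧ S = spaceCone x ∩ eball x ε}

/-- Balls with the light cone of the centre removed, the defining family of `Z`. -/
def BasisZ : Set (Set Mink) := {S | ∃ x ε, 0 < ε ∧ S = eball x ε \ lightCone x}

/-- Zeeman's topology `Z^T` (the Minkowski analogue of the path topology). -/
def ZT : TopologicalSpace Mink := TopologicalSpace.generateFrom BasisT

/-- The topology `Z^S`. -/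
def ZS : TopologicalSpace Mink := TopologicalSpace.generateFrom BasisS

/-- The topology `Z`. -/
def Ztop : TopologicalSpace Mink := TopologicalSpace.generateFrom BasisZ

def Jplus (x : Mink) : Set Mink := {y | Causal x y}
def Jminus (x : Mink) : Set Mink := {y | Causal y x}
def Nplus (x : Mink) : Set Mink := {y | y ≠ x ∧ dtime x y = dspace x y}
def Nminus (x : Mink) : Set Mink := {y | y ≠ x ∧ -dtime x y = dspace x y}

/-- The interval topology `T^tc` whose subbasic open sets are time cones. -/
def Ttc : TopologicalSpace Mink :=
  TopologicalSpace.generateFrom {S | ∃ x, S = timeCone x}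

/-- The interval topology `T^≪` of the irreflexive causal order. -/
def Tll : TopologicalSpace Mink :=
  TopologicalSpace.generateFrom
    ({S | ∃ x, S = Set.univ \ (Jplus x \ {x})} ∪ {S | ∃ x, S = Set.univ \ (Jminus x \ {x})})

/-- The interval topology `T^→` of irreflexive horismos. -/
def Thor : TopologicalSpace Mink :=
  TopologicalSpace.generateFrom
    ({S | ∃ x, S = Set.univ \ Nplus x} ∪ {S | ∃ x, S = Set.univ \ Nminus x})

/-- The topology `(Z^T)′` generated by bounded causal cones. -/
def ZT' : TopologicalSpace Mink :=
  TopologicalSpace.generateFrom {S | ∃ x ε, 0 < ε ∧ S = causalCone x ∩ eball x ε}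

/-- The topology `(Z^S)′` generated by bounded closed space cones. -/
def ZS' : TopologicalSpace Mink :=
  TopologicalSpace.generateFrom {S | ∃ x ε, 0 < ε ∧ S = closedSpaceCone x ∩ eball x ε}

/-- The topology `(T^tc)′` generated by causal cones. -/
def Ttc' : TopologicalSpace Mink :=
  TopologicalSpace.generateFrom {S | ∃ x, S = causalCone x}

/-- The topology `(T^≪)′` generated by closed space cones. -/
def Tll' : TopologicalSpace Mink :=
  TopologicalSpace.generateFrom {S | ∃ x, S = closedSpaceCone x}

/-- An endless causal curve. -/
def EndlessCausalCurve (γ : ℝ → Mink) : Prop :=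
  Continuous γ ∧ (∀ s t : ℝ, s < t → Causal (γ s) (γ t) ∧ γ s ≠ γ t) ∧
    (∀ c : ℝ, ∃ t, c < (γ t).1) ∧ (∀ c : ℝ, ∃ t, (γ t).1 < c)

/-- `γ` is a `T`-limit curve of the sequence `γs` of curves. -/
def IsLimitCurve (T : TopologicalSpace Mink) (γ : ℝ → Mink) (γs : ℕ → ℝ → Mink) : Prop :=
  ∃ nk : ℕ → ℕ, StrictMono nk ∧
    ∀ p ∈ Set.range γ, ∃ pk : ℕ → Mink,
      (∀ k, pk k ∈ Set.range (γs (nk k))) ∧ Filter.Tendsto pk Filter.atTop (@nhds Mink T p)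

/-- A timelike curve: the range of a continuous map from a nondegenerate real interval
into `(M, T_E)` which is strictly `≪`-preserving. -/
def IsTimelikeCurve (C : Set Mink) : Prop :=
  ∃ (s : Set ℝ) (γ : ℝ → Mink), s.OrdConnected ∧ s.Nontrivial ∧ ContinuousOn γ s ∧
    (∀ a ∈ s, ∀ b ∈ s, a < b → Chron (γ a) (γ b)) ∧ C = γ '' s


lemma chron_iff {x y : Mink} : Chron x y ↔ ‖y.2 - x.2‖ < y.1 - x.1 := Iff.rfl

lemma chron_trans {x y z : Mink} (h1 : Chron x y) (h2 : Chron y z) : Chron x z := by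
  simp only [Chron, dspace, dtime] at *
  calc ‖z.2 - x.2‖ ≤ ‖z.2 - y.2‖ + ‖y.2 - x.2‖ := norm_sub_le_norm_sub_add_norm_sub _ _ _
    _ < (z.1 - y.1) + (y.1 - x.1) := add_lt_add h2 h1
    _ = z.1 - x.1 := by ring

lemma chron_ne {x y : Mink} (h : Chron x y) : x ≠ y := by
  rintro rfl
  simp [Chron, dspace, dtime] at h

lemma isOpen_future (x : Mink) : IsOpen {y : Mink | Chron x y} := by
  have : {y : Mink | Chron x y} = {y : Mink | ‖y.2 - x.2‖ < y.1 - x.1} := rfl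
  rw [this]
  exact isOpen_lt (by fun_prop) (by fun_prop)

lemma isOpen_past (x : Mink) : IsOpen {y : Mink | Chron y x} := by
  have : {y : Mink | Chron y x} = {y : Mink | ‖x.2 - y.2‖ < x.1 - y.1} := rfl
  rw [this]
  exact isOpen_lt (by fun_prop) (by fun_prop)

lemma isOpen_eball (x : Mink) (ε : ℝ) : IsOpen (eball x ε) :=
  isOpen_lt (by fun_prop) continuous_const

lemma mem_eball_self (x : Mink) {ε : ℝ} (hε : 0 < ε) : x ∈ eball x ε := by
  simp [eball, hε]

lemma dist_lt_of_mem_eball {x y : Mink} {ε : ℝ} (h : y ∈ eball x ε) : dist y x < ε := by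
  refine lt_of_le_of_lt ?_ h
  rw [Prod.dist_eq]
  apply max_le
  · rw [Real.dist_eq, ← Real.sqrt_sq_eq_abs]
    exact Real.sqrt_le_sqrt (le_add_of_nonneg_right (by positivity))
  · rw [dist_eq_norm]
    conv_lhs => rw [← Real.sqrt_sq (norm_nonneg (y.2 - x.2))]
    exact Real.sqrt_le_sqrt (le_add_of_nonneg_left (sq_nonneg _))

lemma mem_eball_of_dist {x y : Mink} {ε : ℝ} (h : dist y x < ε / 2) : y ∈ eball x ε := by
  have h1 : |y.1 - x.1| ≤ dist y x := by
    rw [Prod.dist_eq, Real.dist_eq]; exact le_max_left _ _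
  have h2 : ‖y.2 - x.2‖ ≤ dist y x := by
    rw [Prod.dist_eq, dist_eq_norm]; exact le_max_right _ _
  have key : Real.sqrt ((y.1 - x.1) ^ 2 + ‖y.2 - x.2‖ ^ 2) ≤ |y.1 - x.1| + ‖y.2 - x.2‖ := by
    rw [← Real.sqrt_sq (by positivity : (0:ℝ) ≤ |y.1 - x.1| + ‖y.2 - x.2‖)]
    apply Real.sqrt_le_sqrt
    have := abs_nonneg (y.1 - x.1); have := norm_nonneg (y.2 - x.2)
    nlinarith [sq_abs (y.1 - x.1)]
  have : Real.sqrt ((y.1 - x.1) ^ 2 + ‖y.2 - x.2‖ ^ 2) < ε := by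
    calc Real.sqrt _ ≤ |y.1 - x.1| + ‖y.2 - x.2‖ := key
      _ ≤ dist y x + dist y x := add_le_add h1 h2
      _ < ε / 2 + ε / 2 := add_lt_add h h
      _ = ε := by ring
  exact this

lemma mem_timeCone_self (x : Mink) : x ∈ timeCone x := Or.inl rfl

lemma zt_isOpen_of_basic {U : Set Mink} (h : ∀ x ∈ U, ∃ ε, 0 < ε ∧ timeCone x ∩ eball x ε ⊆ U) :
    ZT.IsOpen U := by
  have hU : U = ⋃₀ {B | B ∈ BasisT ∧ B ⊆ U} := by
    apply Set.Subset.antisymm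
    · intro x hx
      obtain ⟨ε, hε, hsub⟩ := h x hx
      exact ⟨timeCone x ∩ eball x ε, ⟨⟨x, ε, hε, rfl⟩, hsub⟩,
        ⟨mem_timeCone_self x, mem_eball_self x hε⟩⟩
    · rintro x ⟨B, ⟨-, hBU⟩, hxB⟩
      exact hBU hxB
  rw [hU]
  exact TopologicalSpace.GenerateOpen.sUnion _ fun B hB => TopologicalSpace.GenerateOpen.basic _ hB.1

lemma ZT_le_TE : ZT ≤ TE := by
  intro U hU
  apply zt_isOpen_of_basic
  intro x hx
  obtain ⟨δ, hδ, hball⟩ := Metric.isOpen_iff.mp hU x hx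
  exact ⟨δ, hδ, fun y hy => hball (by simpa [Metric.mem_ball] using dist_lt_of_mem_eball hy.2)⟩

lemma curve_subset_timeCone {C : Set Mink} (hC : IsTimelikeCurve C) {x : Mink} (hx : x ∈ C) :
    C ⊆ timeCone x := by
  obtain ⟨s, γ, -, -, -, hmono, rfl⟩ := hC
  obtain ⟨a, ha, rfl⟩ := hx
  rintro _ ⟨b, hb, rfl⟩
  rcases lt_trichotomy a b with h | h | h
  · exact Or.inr (Or.inl (hmono a ha b hb h))
  · subst h; exact Or.inl rfl
  · exact Or.inr (Or.inr (hmono b hb a ha h))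

lemma part1 {C : Set Mink} (hC : IsTimelikeCurve C) :
    TopologicalSpace.induced (Subtype.val : C → Mink) ZT =
      TopologicalSpace.induced (Subtype.val : C → Mink) TE := by
  apply le_antisymm
  · exact induced_mono ZT_le_TE
  · rw [ZT, induced_generateFrom_eq]
    apply le_generateFrom
    rintro _ ⟨B, ⟨x, ε, hε, rfl⟩, rfl⟩
    by_cases hxC : x ∈ C
    · refine isOpen_induced_iff.mpr ⟨eball x ε, isOpen_eball x ε, ?_⟩
      ext p
      simp only [Set.mem_preimage, Set.mem_inter_iff]
      exact ⟨fun hp => ⟨curve_subset_timeCone hC hxC p.2, hp⟩, fun hp => hp.2⟩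
    · refine isOpen_induced_iff.mpr
        ⟨{y | Chron x y ∨ Chron y x} ∩ eball x ε,
          ((isOpen_future x).union (isOpen_past x)).inter (isOpen_eball x ε), ?_⟩
      ext p
      simp only [Set.mem_preimage, Set.mem_inter_iff]
      constructor
      · rintro ⟨hc | hc, hb⟩
        · exact ⟨Or.inr (Or.inl hc), hb⟩
        · exact ⟨Or.inr (Or.inr hc), hb⟩
      · rintro ⟨hc | hc, hb⟩
        · exact absurd (hc ▸ p.2) hxC
        · exact ⟨hc, hb⟩

lemma chron_seg {p q : Mink} (h : Chron p q) {u v : ℝ} (huv : u < v) :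
    Chron ((1 - u) • p + u • q) ((1 - v) • p + v • q) := by
  simp only [Chron, dspace, dtime, Prod.fst_add, Prod.snd_add, Prod.smul_fst, Prod.smul_snd,
    smul_eq_mul] at *
  have h2 : ((1 - v) • p.2 + v • q.2) - ((1 - u) • p.2 + u • q.2) = (v - u) • (q.2 - p.2) := by
    module
  have h1 : ((1 - v) * p.1 + v * q.1) - ((1 - u) * p.1 + u * q.1) = (v - u) * (q.1 - p.1) := by
    ring
  rw [h2, h1, norm_smul, Real.norm_of_nonneg (by linarith : (0:ℝ) ≤ v - u)]
  exact mul_lt_mul_of_pos_left h (by linarith)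

lemma chainCurve (x : Mink) (z : ℕ → Mink)
    (hchain : ∀ k, Chron (z (k+1)) (z k))
    (hx : ∀ k, Chron x (z k))
    (hlim : Tendsto z atTop (nhds x)) :
    ∃ C, IsTimelikeCurve C ∧ x ∈ C ∧ ∀ k, z k ∈ C := by
  classical
  set c : ℕ → ℝ := fun j => (2:ℝ)⁻¹ ^ j with hcdef
  have hcpos : ∀ j, 0 < c j := fun j => pow_pos (by norm_num) j
  have hcsucc : ∀ j, c (j + 1) < c j := by
    intro j
    have : c (j + 1) = c j * 2⁻¹ := pow_succ _ _
    rw [this]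
    exact mul_lt_of_lt_one_right (hcpos j) (by norm_num)
  have hcmono : ∀ i j : ℕ, i ≤ j → c j ≤ c i := fun i j hij =>
    pow_le_pow_of_le_one (by norm_num) (by norm_num) hij
  have hcanti : ∀ a b : ℕ, c a < c b → b < a := by
    intro a b h
    by_contra h'
    push_neg at h'
    exact absurd (hcmono a b h') (not_le.mpr h)
  have hc0 : c 0 = 1 := pow_zero _
  have hc1 : ∀ j, c j ≤ 1 := fun j => hc0 ▸ hcmono 0 j (Nat.zero_le j)
  have hclim : Tendsto c atTop (nhds 0) :=
    tendsto_pow_atTop_nhds_zero_of_lt_one (by norm_num) (by norm_num)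
  have hkey1 : ∀ j : ℕ, c (j + 1) * 2 ^ (j + 1) = 1 := by
    intro j
    rw [hcdef]
    rw [← mul_pow]
    norm_num
  have hkey2 : ∀ j : ℕ, c j * 2 ^ (j + 1) = 2 := by
    intro j
    rw [hcdef, pow_succ, ← mul_assoc, ← mul_pow]
    norm_num
  set F : ℕ → ℝ → Mink := fun j t =>
    (1 - (t * 2 ^ (j + 1) - 1)) • z (j + 1) + (t * 2 ^ (j + 1) - 1) • z j with hFdef
  set γ : ℝ → Mink := fun t => if h : ∃ j, c (j + 1) < t then F (Nat.find h) t else x with hγdef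
  have hfind : ∀ (j : ℕ) (t : ℝ), c (j + 1) < t → t ≤ c j → γ t = F j t := by
    intro j t h1 h2
    have hex : ∃ i, c (i + 1) < t := ⟨j, h1⟩
    rw [hγdef]
    simp only [dif_pos hex]
    congr 1
    rw [Nat.find_eq_iff]
    refine ⟨h1, fun m hm => not_lt.mpr (le_trans h2 (hcmono (m + 1) j (by omega)))⟩
  have hEqOn : ∀ j : ℕ, Set.EqOn γ (F j) (Set.Icc (c (j + 1)) (c j)) := by
    intro j t ht
    rcases eq_or_lt_of_le ht.1 with h0 | h0
    · have hA : γ t = F (j + 1) t := hfind (j + 1) t (h0 ▸ hcsucc (j + 1)) (le_of_eq h0.symm)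
      rw [hA, hFdef, ← h0]
      have e1 : c (j + 1) * 2 ^ (j + 1 + 1) - 1 = 1 := by
        rw [pow_succ]
        rw [← mul_assoc]  -- c(j+1) * 2^(j+1) * 2
        rw [hkey1]
        norm_num
      have e2 : c (j + 1) * 2 ^ (j + 1) - 1 = 0 := by rw [hkey1]; norm_num
      simp only [e1, e2]
      norm_num
    · exact hfind j t h0 ht.2
  have hγc : ∀ j, γ (c j) = z j := by
    intro j
    rw [hEqOn j (Set.mem_Icc.mpr ⟨le_of_lt (hcsucc j), le_refl _⟩), hFdef]
    have e1 : c j * 2 ^ (j + 1) - 1 = 1 := by rw [hkey2]; norm_num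
    simp only [e1]
    norm_num
  have hγ0 : γ 0 = x := by
    rw [hγdef]
    have : ¬∃ j, c (j + 1) < (0:ℝ) := by
      push_neg
      exact fun j => le_of_lt (hcpos (j + 1))
    simp only [dif_neg this]
  have hidx : ∀ t : ℝ, 0 < t → t ≤ 1 → ∃ j, c (j + 1) < t ∧ t ≤ c j := by
    intro t ht0 ht1
    have hex : ∃ j, c j < t := (hclim.eventually (gt_mem_nhds ht0)).exists
    have hm : c (Nat.find hex) < t := Nat.find_spec hex
    have hm0 : Nat.find hex ≠ 0 := by
      intro h
      rw [h, hc0] at hm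
      linarith
    obtain ⟨k, hk⟩ := Nat.exists_eq_succ_of_ne_zero hm0
    rw [Nat.succ_eq_add_one] at hk
    refine ⟨k, by rw [← hk]; exact hm, ?_⟩
    have := Nat.find_min hex (m := k) (by omega)
    exact le_of_not_gt this
  have hFcont : ∀ j, Continuous (F j) := by
    intro j
    apply Continuous.add
    · exact Continuous.smul (by fun_prop : Continuous fun t : ℝ => 1 - (t * 2 ^ (j + 1) - 1)) continuous_const
    · exact Continuous.smul (by fun_prop : Continuous fun t : ℝ => t * 2 ^ (j + 1) - 1) continuous_const
  have hconIcc : ∀ j, ContinuousOn γ (Set.Icc (c (j + 1)) (c j)) := fun j =>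
    ((hFcont j).continuousOn).congr (hEqOn j)
  have hu01 : ∀ (j : ℕ) (t : ℝ), t ∈ Set.Icc (c (j + 1)) (c j) →
      0 ≤ t * 2 ^ (j + 1) - 1 ∧ t * 2 ^ (j + 1) - 1 ≤ 1 := by
    intro j t ht
    have hp : (0:ℝ) < 2 ^ (j + 1) := by positivity
    constructor
    · have := mul_le_mul_of_nonneg_right ht.1 (le_of_lt hp)
      rw [hkey1] at this
      linarith
    · have := mul_le_mul_of_nonneg_right ht.2 (le_of_lt hp)
      rw [hkey2] at this
      linarith
  have hcomb : ∀ (j : ℕ) (t : ℝ), t ∈ Set.Icc (c (j + 1)) (c j) →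
      dist (γ t) x ≤ max (dist (z (j + 1)) x) (dist (z j) x) := by
    intro j t ht
    obtain ⟨hu0, hu1⟩ := hu01 j t ht
    rw [hEqOn j ht, dist_eq_norm]
    have hsplit : F j t - x =
        (1 - (t * 2 ^ (j + 1) - 1)) • (z (j + 1) - x) + (t * 2 ^ (j + 1) - 1) • (z j - x) := by
      rw [hFdef]
      module
    rw [hsplit]
    set u := t * 2 ^ (j + 1) - 1
    set M := max (dist (z (j + 1)) x) (dist (z j) x) with hM
    have hM1 : ‖z (j + 1) - x‖ ≤ M := by rw [← dist_eq_norm]; exact le_max_left _ _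
    have hM2 : ‖z j - x‖ ≤ M := by rw [← dist_eq_norm]; exact le_max_right _ _
    calc ‖(1 - u) • (z (j + 1) - x) + u • (z j - x)‖
        ≤ ‖(1 - u) • (z (j + 1) - x)‖ + ‖u • (z j - x)‖ := norm_add_le _ _
      _ = (1 - u) * ‖z (j + 1) - x‖ + u * ‖z j - x‖ := by
          rw [norm_smul, norm_smul, Real.norm_of_nonneg (by linarith),
            Real.norm_of_nonneg hu0]
      _ ≤ (1 - u) * M + u * M := by
          apply add_le_add
          · exact mul_le_mul_of_nonneg_left hM1 (by linarith)
          · exact mul_le_mul_of_nonneg_left hM2 hu0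
      _ = M := by ring
  -- continuity at 0
  have hcont0 : ContinuousWithinAt γ (Set.Icc (0:ℝ) 1) 0 := by
    rw [Metric.continuousWithinAt_iff]
    intro ε hε
    obtain ⟨J, hJ⟩ := Metric.tendsto_atTop.mp hlim (ε / 2) (by linarith)
    refine ⟨c J, hcpos J, ?_⟩
    intro t ht hdist
    rw [hγ0]
    rcases eq_or_lt_of_le ht.1 with h0 | h0
    · rw [← h0, hγ0]
      simpa using hε
    · obtain ⟨j, hj1, hj2⟩ := hidx t h0 ht.2
      have htc : t < c J := by
        have : dist t 0 = t := by
          rw [Real.dist_eq, sub_zero, abs_of_pos h0]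
        rwa [this] at hdist
      have hJj : J ≤ j := by
        have := hcanti (j + 1) J (lt_trans hj1 htc)
        omega
      have h1 : dist (z (j + 1)) x < ε / 2 := hJ (j + 1) (by omega)
      have h2 : dist (z j) x < ε / 2 := hJ j hJj
      calc dist (γ t) x ≤ max (dist (z (j + 1)) x) (dist (z j) x) := hcomb j t ⟨le_of_lt hj1, hj2⟩
        _ < ε := max_lt (by linarith) (by linarith)
  -- full continuity
  have hcont : ContinuousOn γ (Set.Icc (0:ℝ) 1) := by
    intro t ht
    rcases eq_or_lt_of_le ht.1 with h0 | h0
    · rw [← h0]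
      exact hcont0
    · obtain ⟨j, hj1, hj2⟩ := hidx t h0 ht.2
      rcases eq_or_lt_of_le hj2 with heq | hlt
      · -- t = c j, knot point
        have hL : ContinuousWithinAt γ (Set.Iic (c j)) (c j) := by
          apply ContinuousWithinAt.mono_of_mem_nhdsWithin
          · exact hconIcc j (c j) (Set.mem_Icc.mpr ⟨le_of_lt (hcsucc j), le_refl _⟩)
          · apply Filter.mem_of_superset
              (inter_mem_nhdsWithin (Set.Iic (c j)) (Ioi_mem_nhds (hcsucc j)))
            rintro s ⟨hs1, hs2⟩
            exact ⟨le_of_lt hs2, hs1⟩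
        subst heq
        cases j with
        | zero =>
          rw [hc0] at hL ⊢
          exact hL.mono (fun s hs => hs.2)
        | succ k =>
          have hR : ContinuousWithinAt γ (Set.Ici (c (k + 1))) (c (k + 1)) := by
            apply ContinuousWithinAt.mono_of_mem_nhdsWithin
            · exact hconIcc k (c (k + 1)) (Set.mem_Icc.mpr ⟨le_refl _, le_of_lt (hcsucc k)⟩)
            · apply Filter.mem_of_superset
                (inter_mem_nhdsWithin (Set.Ici (c (k + 1))) (Iio_mem_nhds (hcsucc k)))
              rintro s ⟨hs1, hs2⟩
              exact ⟨hs1, le_of_lt hs2⟩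
          exact (hL.union hR).mono (fun s _ => le_total s (c (k + 1)))
      · -- interior point
        apply ContinuousAt.continuousWithinAt
        apply ((hFcont j).continuousAt).congr
        exact Filter.eventuallyEq_of_mem (Ioo_mem_nhds hj1 hlt)
          (fun s hs => (hEqOn j (Set.mem_Icc.mpr ⟨le_of_lt hs.1, le_of_lt hs.2⟩)).symm)
  -- monotonicity
  have hmono1 : ∀ (j : ℕ) (a b : ℝ), a ∈ Set.Icc (c (j + 1)) (c j) →
      b ∈ Set.Icc (c (j + 1)) (c j) → a < b → Chron (γ a) (γ b) := by
    intro j a b ha hb hab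
    rw [hEqOn j ha, hEqOn j hb, hFdef]
    have hp : (0:ℝ) < 2 ^ (j + 1) := by positivity
    exact chron_seg (hchain j) (by nlinarith)
  have hchain' : ∀ i k : ℕ, i < k → Chron (z k) (z i) := by
    intro i k hik
    induction k with
    | zero => omega
    | succ n ih =>
      rcases Nat.lt_succ_iff_lt_or_eq.mp hik with h | h
      · exact chron_trans (hchain n) (ih h)
      · subst h
        exact hchain i
  have hstep : ∀ (b : ℝ) (jb : ℕ), c (jb + 1) < b → b ≤ c jb → Chron (z (jb + 1)) (γ b) := by
    intro b jb h1 h2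
    have := hmono1 jb (c (jb + 1)) b (Set.mem_Icc.mpr ⟨le_refl _, le_of_lt (hcsucc jb)⟩)
      (Set.mem_Icc.mpr ⟨le_of_lt h1, h2⟩) h1
    rwa [hγc (jb + 1)] at this
  have hmonoγ : ∀ a ∈ Set.Icc (0:ℝ) 1, ∀ b ∈ Set.Icc (0:ℝ) 1, a < b → Chron (γ a) (γ b) := by
    intro a ha b hb hab
    have hb0 : 0 < b := lt_of_le_of_lt ha.1 hab
    obtain ⟨jb, hjb1, hjb2⟩ := hidx b hb0 hb.2
    have h3 : Chron (z (jb + 1)) (γ b) := hstep b jb hjb1 hjb2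
    rcases eq_or_lt_of_le ha.1 with h0 | h0
    · rw [← h0, hγ0]
      exact chron_trans (hx (jb + 1)) h3
    · obtain ⟨ja, hja1, hja2⟩ := hidx a h0 (le_trans (le_of_lt hab) hb.2)
      have hjba : jb ≤ ja := by
        have h4 : c (ja + 1) < c jb := lt_of_lt_of_le (lt_trans hja1 hab) hjb2
        have := hcanti (ja + 1) jb h4
        omega
      by_cases hsame : ja = jb
      · subst hsame
        exact hmono1 ja a b (Set.mem_Icc.mpr ⟨le_of_lt hja1, hja2⟩)
          (Set.mem_Icc.mpr ⟨le_of_lt hjb1, hjb2⟩) hab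
      · have hlt2 : jb + 1 ≤ ja := by omega
        have h2 : z ja = z (jb + 1) ∨ Chron (z ja) (z (jb + 1)) := by
          rcases eq_or_lt_of_le hlt2 with h | h
          · exact Or.inl (by rw [← h])
          · exact Or.inr (hchain' (jb + 1) ja h)
        have h1 : γ a = z ja ∨ Chron (γ a) (z ja) := by
          rcases eq_or_lt_of_le hja2 with h | h
          · exact Or.inl (by rw [h, hγc])
          · refine Or.inr ?_
            have := hmono1 ja a (c ja) (Set.mem_Icc.mpr ⟨le_of_lt hja1, hja2⟩)
              (Set.mem_Icc.mpr ⟨le_of_lt (hcsucc ja), le_refl _⟩) h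
            rwa [hγc ja] at this
        have h23 : Chron (z ja) (γ b) := by
          rcases h2 with h | h
          · rw [h]
            exact h3
          · exact chron_trans h h3
        rcases h1 with h | h
        · rw [h]
          exact h23
        · exact chron_trans h h23
  refine ⟨γ '' Set.Icc 0 1,
    ⟨Set.Icc 0 1, γ, Set.ordConnected_Icc,
      ⟨0, Set.mem_Icc.mpr ⟨le_refl _, zero_le_one⟩, 1,
        Set.mem_Icc.mpr ⟨zero_le_one, le_refl _⟩, zero_ne_one⟩,
      hcont, hmonoγ, rfl⟩,
    ⟨0, Set.mem_Icc.mpr ⟨le_refl _, zero_le_one⟩, hγ0⟩,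
    fun k => ⟨c k, Set.mem_Icc.mpr ⟨le_of_lt (hcpos k), hc1 k⟩, hγc k⟩⟩

def tau : Mink → Mink := fun p => (-p.1, p.2)

lemma tau_tau (p : Mink) : tau (tau p) = p := by simp [tau]

lemma tau_cont : Continuous tau := by
  unfold tau
  fun_prop

lemma chron_tau {x y : Mink} : Chron (tau y) (tau x) ↔ Chron x y := by
  simp only [Chron, dspace, dtime, tau]
  rw [norm_sub_rev]
  constructor <;> intro h <;> linarith

lemma timelike_tau {C : Set Mink} (h : IsTimelikeCurve C) : IsTimelikeCurve (tau '' C) := by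
  obtain ⟨s, γ, hoc, hnt, hcont, hmono, rfl⟩ := h
  refine ⟨(fun a : ℝ => -a) ⁻¹' s, fun a => tau (γ (-a)), ?_, ?_, ?_, ?_, ?_⟩
  · rw [Set.ordConnected_def]
    intro a ha b hb t ht
    have : -t ∈ Set.Icc (-b) (-a) := ⟨neg_le_neg ht.2, neg_le_neg ht.1⟩
    exact hoc.out hb ha this
  · obtain ⟨a, ha, b, hb, hab⟩ := hnt
    exact ⟨-a, by simpa using ha, -b, by simpa using hb, by simpa using hab⟩
  · exact tau_cont.comp_continuousOn
      (hcont.comp continuous_neg.continuousOn (fun a ha => ha))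
  · intro a ha b hb hab
    exact chron_tau.mpr (hmono (-b) hb (-a) ha (by linarith))
  · ext w
    constructor
    · rintro ⟨p, ⟨b, hb, rfl⟩, rfl⟩
      refine ⟨-b, by simpa using hb, ?_⟩
      simp
    · rintro ⟨a, ha, rfl⟩
      exact ⟨γ (-a), ⟨-a, ha, rfl⟩, rfl⟩

lemma chainCurvePast (x : Mink) (z : ℕ → Mink)
    (hchain : ∀ k, Chron (z k) (z (k + 1)))
    (hx : ∀ k, Chron (z k) x)
    (hlim : Tendsto z atTop (nhds x)) :
    ∃ C, IsTimelikeCurve C ∧ x ∈ C ∧ ∀ k, z k ∈ C := by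
  obtain ⟨C, hC, hxC, hzC⟩ := chainCurve (tau x) (fun k => tau (z k))
    (fun k => chron_tau.mpr (hchain k)) (fun k => chron_tau.mpr (hx k))
    ((tau_cont.tendsto x).comp hlim)
  exact ⟨tau '' C, timelike_tau hC, ⟨tau x, hxC, tau_tau x⟩,
    fun k => ⟨tau (z k), hzC k, tau_tau (z k)⟩⟩

lemma subseq_chain (x : Mink) (y : ℕ → Mink) (S : Set ℕ) (hS : S.Infinite)
    (hylim : Tendsto y atTop (nhds x)) (V : ℕ → Set Mink)
    (hVopen : ∀ m, IsOpen (V m)) (hxV : ∀ m ∈ S, x ∈ V m) :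
    ∃ n : ℕ → ℕ, StrictMono n ∧ (∀ k, n k ∈ S) ∧ ∀ k, y (n (k + 1)) ∈ V (n k) := by
  classical
  have hnext : ∀ m ∈ S, ∃ m', m' ∈ S ∧ m < m' ∧ y m' ∈ V m := by
    intro m hm
    obtain ⟨N, hN⟩ := eventually_atTop.mp
      (hylim.eventually ((hVopen m).mem_nhds (hxV m hm)))
    obtain ⟨m', hm'S, hm'⟩ := hS.exists_gt (max m N)
    exact ⟨m', hm'S, lt_of_le_of_lt (le_max_left _ _) hm',
      hN m' (le_trans (le_max_right _ _) (le_of_lt hm'))⟩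
  choose next hnext1 hnext2 hnext3 using hnext
  obtain ⟨m0, hm0⟩ := hS.nonempty
  let seq : ℕ → {m : ℕ // m ∈ S} := fun k =>
    Nat.rec ⟨m0, hm0⟩ (fun _ p => ⟨next p.1 p.2, hnext1 p.1 p.2⟩) k
  refine ⟨fun k => (seq k).1, strictMono_nat_of_lt_succ fun k => hnext2 _ _,
    fun k => (seq k).2, fun k => hnext3 _ _⟩

lemma part2 (T : TopologicalSpace Mink)
    (hT : ∀ C : Set Mink, IsTimelikeCurve C →
      TopologicalSpace.induced (Subtype.val : C → Mink) T =
        TopologicalSpace.induced (Subtype.val : C → Mink) TE) :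
    ZT ≤ T := by
  intro U hU
  apply zt_isOpen_of_basic
  intro x hx
  by_contra hcon
  push_neg at hcon
  have hy : ∀ n : ℕ, ∃ y, y ∈ timeCone x ∩ eball x (1 / (n + 1)) ∧ y ∉ U := by
    intro n
    have h1 := hcon (1 / (n + 1)) (by positivity)
    rw [Set.not_subset] at h1
    obtain ⟨a, ha1, ha2⟩ := h1
    exact ⟨a, ha1, ha2⟩
  choose y hy1 hy2 using hy
  have hylim : Tendsto y atTop (@nhds Mink instTopologicalSpaceProd x) := by
    rw [tendsto_iff_dist_tendsto_zero]
    apply squeeze_zero (fun n => dist_nonneg)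
      (fun n => le_of_lt (dist_lt_of_mem_eball (hy1 n).2))
    exact tendsto_one_div_add_atTop_nhds_zero_nat
  have hyne : ∀ n, y n ≠ x := fun n h => hy2 n (h ▸ hx)
  have hcase : ∀ n, Chron x (y n) ∨ Chron (y n) x := by
    intro n
    rcases (hy1 n).1 with h | h
    · exact absurd h (hyne n)
    · exact h
  have hinf : {n | Chron x (y n)}.Infinite ∨ {n | Chron (y n) x}.Infinite := by
    by_contra h
    push_neg at h
    have hfin := Set.Finite.union h.1 h.2
    have huniv : {n | Chron x (y n)} ∪ {n | Chron (y n) x} = Set.univ := by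
      ext n
      simpa using hcase n
    rw [huniv] at hfin
    exact Set.infinite_univ hfin
  have key : ∃ C, IsTimelikeCurve C ∧ x ∈ C ∧
      ∃ w : ℕ → Mink, (∀ k, w k ∈ C ∧ w k ∉ U) ∧ Tendsto w atTop (@nhds Mink instTopologicalSpaceProd x) := by
    rcases hinf with hS | hS
    · obtain ⟨n, hnmono, hnS, hnchain⟩ := subseq_chain x y _ hS hylim
        (fun m => {w | Chron w (y m)}) (fun m => isOpen_past (y m)) (fun m hm => hm)
      obtain ⟨C, hC, hxC, hzC⟩ := chainCurve x (fun k => y (n k))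
        (fun k => hnchain k) (fun k => hnS k)
        (hylim.comp hnmono.tendsto_atTop)
      exact ⟨C, hC, hxC, fun k => y (n k),
        fun k => ⟨hzC k, hy2 (n k)⟩, hylim.comp hnmono.tendsto_atTop⟩
    · obtain ⟨n, hnmono, hnS, hnchain⟩ := subseq_chain x y _ hS hylim
        (fun m => {w | Chron (y m) w}) (fun m => isOpen_future (y m)) (fun m hm => hm)
      obtain ⟨C, hC, hxC, hzC⟩ := chainCurvePast x (fun k => y (n k))
        (fun k => hnchain k) (fun k => hnS k)
        (hylim.comp hnmono.tendsto_atTop)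
      exact ⟨C, hC, hxC, fun k => y (n k),
        fun k => ⟨hzC k, hy2 (n k)⟩, hylim.comp hnmono.tendsto_atTop⟩
  obtain ⟨C, hC, hxC, w, hw, hwlim⟩ := key
  have hTC := hT C hC
  have h1 : @IsOpen C (TopologicalSpace.induced (Subtype.val : C → Mink) TE)
      (Subtype.val ⁻¹' U) := by
    rw [← hTC]
    exact isOpen_induced_iff.mpr ⟨U, hU, rfl⟩
  clear hTC hT hU hcon
  clear T
  obtain ⟨V', hV', hVeq⟩ := isOpen_induced_iff.mp h1
  have hxV' : x ∈ V' := by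
    have h2 : (⟨x, hxC⟩ : C) ∈ Subtype.val ⁻¹' U := hx
    rw [← hVeq] at h2
    exact h2
  obtain ⟨k, hk⟩ := (hwlim.eventually (hV'.mem_nhds hxV')).exists
  have h3 : (⟨w k, (hw k).1⟩ : C) ∈ Subtype.val ⁻¹' V' := hk
  rw [hVeq] at h3
  exact (hw k).2 h3

/-- `Z^T` induces on every timelike curve the Euclidean subspace topology, and it is the
finest topology with this property (any other such topology is coarser or equal,
i.e. `≥` in Mathlib's order on topologies). -/
theorem ZT_finest_for_timelike_curves :
    (∀ C : Set Mink, IsTimelikeCurve C →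
      TopologicalSpace.induced (Subtype.val : C → Mink) ZT =
        TopologicalSpace.induced (Subtype.val : C → Mink) TE) ∧
    ∀ T : TopologicalSpace Mink,
      (∀ C : Set Mink, IsTimelikeCurve C →
        TopologicalSpace.induced (Subtype.val : C → Mink) T =
          TopologicalSpace.induced (Subtype.val : C → Mink) TE) →
      ZT ≤ T :=
  ⟨fun _ hC => part1 hC, part2⟩
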